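/- arXiv:1802.00881 — 2 statements merged into one kernel-verified Lean document; each statement's English description precedes it below -/
import Mathlib

section
/- Let two reclosers share shape constants a > 0, m > 0, c > 0, b ≥ 0, K ≥ 0 and pickup current Iₚ > 0, with dial settings D₁ < D₂, and let ΔT ≥ 0 be a required coordination margin. Then the margin condition T_{D₂}(I) − T_{D₁}(I) ≥ ΔT holds for every fault current I > Iₚ·c^(1/m) if and only if (D₂ − D₁)·b ≥ ΔT. -/
/-- For two reclosers sharing shape constants and pickup current, with dial
settings `D₁ < D₂` and required margin `ΔT ≥ 0`, the coordination-margin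
condition `T_{D₂}(I) − T_{D₁}(I) ≥ ΔT` holds for every fault current
`I > Iₚ·c^(1/m)` if and only if `(D₂ − D₁)·b ≥ ΔT`. -/
theorem tci_coordination_margin_iff (a m c b K Ip D₁ D₂ ΔT : ℝ)
    (ha : 0 < a) (hm : 0 < m) (hc : 0 < c) (hb : 0 ≤ b) (hK : 0 ≤ K)
    (hIp : 0 < Ip) (hD₁ : 0 < D₁) (hD₁₂ : D₁ < D₂) (hΔT : 0 ≤ ΔT) :
    (∀ I : ℝ, Ip * c ^ (1 / m) < I →
        ΔT ≤ (a * D₂ / ((I / Ip) ^ m - c) + b * D₂ + K) -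
          (a * D₁ / ((I / Ip) ^ m - c) + b * D₁ + K)) ↔
      ΔT ≤ (D₂ - D₁) * b := by
  have hΔD : 0 < D₂ - D₁ := by linarith
  constructor
  · intro h
    refine le_of_forall_pos_le_add fun ε hε => ?_
    set M := a * (D₂ - D₁) / ε with hMdef
    have hM : 0 < M := by positivity
    have hcM : (0:ℝ) < c + M := by linarith
    set I := Ip * (c + M) ^ (1 / m) with hIdef
    have hI : Ip * c ^ (1 / m) < I := by
      have := Real.rpow_lt_rpow hc.le (show c < c + M by linarith) (by positivity : 0 < 1/m)
      exact mul_lt_mul_of_pos_left this hIp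
    have hIIp : I / Ip = (c + M) ^ (1 / m) := by
      rw [hIdef, mul_comm, mul_div_assoc, div_self hIp.ne', mul_one]
    have hpow : (I / Ip) ^ m = c + M := by
      rw [hIIp, ← Real.rpow_mul hcM.le, one_div_mul_cancel hm.ne', Real.rpow_one]
    have key := h I hI
    rw [hpow] at key
    have hMeq : a * (D₂ - D₁) / M = ε := by
      rw [hMdef]; field_simp
    have hdd : a * D₂ / (c + M - c) - a * D₁ / (c + M - c) = a * (D₂ - D₁) / M := by
      have : c + M - c = M := by ring
      rw [this]; ring
    linarith [key, hdd, hMeq]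
  · intro h I hI
    have hx : c ^ (1 / m) < I / Ip := (lt_div_iff₀ hIp).mpr (by linarith [hI])
    have hcpos : (0:ℝ) < c ^ (1 / m) := Real.rpow_pos_of_pos hc _
    have hX : c < (I / Ip) ^ m := by
      have := Real.rpow_lt_rpow hcpos.le hx hm
      rwa [← Real.rpow_mul hc.le, one_div_mul_cancel hm.ne', Real.rpow_one] at this
    have hXpos : 0 < (I / Ip) ^ m - c := by linarith
    have hnn : 0 ≤ a * (D₂ - D₁) / ((I / Ip) ^ m - c) := by positivity
    have hdd : a * D₂ / ((I / Ip) ^ m - c) - a * D₁ / ((I / Ip) ^ m - c)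
        = a * (D₂ - D₁) / ((I / Ip) ^ m - c) := by ring
    nlinarith [hnn, hdd]
end

section
/- Let T_P and T_B be the response-time curves of a primary and a backup recloser, with T_P antitone on an interval S of fault currents. Suppose they are coordinated before DG installation: T_B(I) − T_P(I) ≥ ΔT for every I ∈ S. After DG is installed between the two reclosers, the primary sees fault current I + ΔI with disparity ΔI ≥ 0 while the backup still sees I. Then for every I with I ∈ S and I + ΔI ∈ S, the coordination condition still holds: T_B(I) − T_P(I + ΔI) ≥ ΔT. That is, DG's fault current contribution between two reclosers never disrupts recloser–recloser coordination. -/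
/-- Suppose the primary response-time curve `T_P` is antitone on an interval
`S` of fault currents and the primary/backup pair is coordinated before DG
installation: `T_B(I) − T_P(I) ≥ ΔT` for every `I ∈ S`. After DG is installed
between the two reclosers, the primary sees fault current `I + ΔI` with
disparity `ΔI ≥ 0` while the backup still sees `I`; then the coordination
condition still holds: DG's fault current contribution between two reclosers
never disrupts recloser–recloser coordination. -/
theorem dg_preserves_recloser_coordination (T_P T_B : ℝ → ℝ) (S : Set ℝ)
    (hS : S.OrdConnected) (hanti : AntitoneOn T_P S) (ΔT ΔI : ℝ)
    (hΔI : 0 ≤ ΔI) (hcoord : ∀ I ∈ S, ΔT ≤ T_B I - T_P I) :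
    ∀ I, I ∈ S → I + ΔI ∈ S → ΔT ≤ T_B I - T_P (I + ΔI) := by
  intro I hI hI'
  have h := hanti hI hI' (by linarith)
  have := hcoord I hI
  linarith
end
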